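/- Let A ⊆ ℝ^n be a centrally symmetric convex body (A = -A) and X ⊆ ℝ^n a finite set such that for all distinct x₁, x₂ ∈ X, the translates x₁ + A and x₂ + A touch each other (intersect with disjoint interiors). Then |X| ≤ 2^n. -/

import Mathlib

open Pointwise

/-- Two sets touch each other if they intersect but their interiors are disjoint. -/
def Touches {n : ℕ} (B C : Set (EuclideanSpace ℝ (Fin n))) : Prop :=
  (B ∩ C).Nonempty ∧ interior B ∩ interior C = ∅

section Aux

open MeasureTheory Set

variable {F : Type*} [NormedAddCommGroup F] [NormedSpace ℝ F]

/-- If a continuous linear functional is bounded above by `c` on `s` and takes a positive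
value somewhere, then it is strictly below `c` on the interior of `s`. -/
private lemma aux_lt_on_interior (f : F →L[ℝ] ℝ) {u : F} (hu : 0 < f u) {s : Set F} {c : ℝ}
    (h : ∀ z ∈ s, f z ≤ c) {p : F} (hp : p ∈ interior s) : f p < c := by
  have hu0 : u ≠ 0 := by rintro rfl; simp at hu
  obtain ⟨ε, hε, hball⟩ := Metric.isOpen_iff.1 isOpen_interior p hp
  set δ : ℝ := ε / (2 * ‖u‖) with hδ
  have hn : 0 < ‖u‖ := norm_pos_iff.2 hu0
  have hδpos : 0 < δ := div_pos hε (by positivity)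
  have hmem : p + δ • u ∈ s := by
    refine interior_subset (hball ?_)
    have : ‖δ • u‖ = ε / 2 := by
      rw [norm_smul, Real.norm_eq_abs, abs_of_pos hδpos, hδ]
      field_simp
    simp only [Metric.mem_ball, dist_eq_norm, add_sub_cancel_left, this]
    linarith
  have h2 := h _ hmem
  rw [map_add, f.map_smul, smul_eq_mul] at h2
  nlinarith

/-- Supporting functional at a point of a convex set not in the interior. -/
private lemma aux_support_fn {A : Set F} (hA : Convex ℝ A) (h0 : (0 : F) ∈ interior A)
    {m : F} (hm : m ∉ interior A) :
    ∃ f : F →L[ℝ] ℝ, 0 < f m ∧ ∀ a ∈ A, f a ≤ f m := by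
  obtain ⟨f, hf⟩ := geometric_hahn_banach_open_point hA.interior isOpen_interior hm
  have hpos : 0 < f m := by simpa using hf 0 h0
  refine ⟨f, hpos, fun a ha => ?_⟩
  by_contra hcon
  push_neg at hcon
  have hfa : 0 < f a := hpos.trans hcon
  set t : ℝ := f m / f a with ht
  have ht0 : 0 ≤ t := le_of_lt (div_pos hpos hfa)
  have ht1 : t < 1 := (div_lt_one hfa).2 hcon
  have hmemI : t • a ∈ interior A := by
    have := hA.combo_closure_interior_mem_interior (subset_closure ha) h0 ht0
      (by linarith : (0:ℝ) < 1 - t) (by ring)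
    simpa using this
  have hlt := hf _ hmemI
  rw [f.map_smul, smul_eq_mul, ht, div_mul_cancel₀ _ hfa.ne'] at hlt
  exact lt_irrefl _ hlt

/-- If a point of a submodule lies in the interior (within the submodule) of the preimage of a
convex set with `0` in its interior, then it lies in the interior of the set itself. -/
private lemma aux_mem_interior_of_subtype {A : Set F} (hA : Convex ℝ A)
    (h0 : (0 : F) ∈ interior A) (V : Submodule ℝ F) {w : V}
    (hw : w ∈ interior (((↑) : V → F) ⁻¹' A)) : (w : F) ∈ interior A := by
  by_contra hm
  obtain ⟨f, hfm, hfA⟩ := aux_support_fn hA h0 hm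
  set g : V →L[ℝ] ℝ := f.comp V.subtypeL with hg
  have hgw : g w = f (w : F) := rfl
  have hgA : ∀ z ∈ (((↑) : V → F) ⁻¹' A), g z ≤ f (w : F) := fun z hz => hfA _ hz
  have := aux_lt_on_interior g (u := w) (by rw [hgw]; exact hfm) hgA hw
  rw [hgw] at this
  exact lt_irrefl _ this

private lemma aux_neg_eq_smul (s : Set F) : -s = (-1 : ℝ) • s := by
  ext z
  simp only [Set.mem_neg, Set.mem_smul_set]
  constructor
  · intro h
    exact ⟨-z, h, by simp⟩
  · rintro ⟨y, hy, rfl⟩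
    simpa using hy

private lemma aux_interior_neg (s : Set F) : interior (-s) = -interior s := by
  rw [aux_neg_eq_smul s, interior_smul₀ (by norm_num : (-1:ℝ) ≠ 0), ← aux_neg_eq_smul]

end Aux

section Petty

open Set MeasureTheory ENNReal

set_option maxHeartbeats 1000000 in
/-- Core lemma (Danzer–Grünbaum / Petty): if `A` is a symmetric convex set with nonempty
interior and the points of `X` satisfy that half of each pairwise difference lies on the
boundary of `A`, then `|X| ≤ 2 ^ n`. -/
private theorem petty_core (n : ℕ) :
    ∀ (A : Set (EuclideanSpace ℝ (Fin n))), Convex ℝ A → (interior A).Nonempty → A = -A →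
    ∀ (X : Finset (EuclideanSpace ℝ (Fin n))),
      (∀ x ∈ X, ∀ y ∈ X, x ≠ y → (2⁻¹ : ℝ) • (x - y) ∈ A \ interior A) →
      X.card ≤ 2 ^ n := by
  induction n using Nat.strong_induction_on with
  | _ n IH =>
  intro A hA hint hsymm X hX
  classical
  by_cases hcard : X.card ≤ 1
  · exact hcard.trans Nat.one_le_two_pow
  push_neg at hcard
  -- `0` lies in the interior of `A`
  have hIntNeg : interior A = -interior A := by
    conv_lhs => rw [hsymm]
    exact aux_interior_neg A
  have hnegmem : ∀ z, z ∈ interior A → -z ∈ interior A := by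
    intro z hz
    rw [hIntNeg]
    exact Set.neg_mem_neg.2 hz
  have h0 : (0 : EuclideanSpace ℝ (Fin n)) ∈ interior A := by
    obtain ⟨a, ha⟩ := hint
    have ha' := hnegmem a ha
    have := hA.interior ha ha' (by norm_num : (0:ℝ) ≤ 2⁻¹) (by norm_num : (0:ℝ) ≤ 2⁻¹)
      (by norm_num)
    simpa using this
  obtain ⟨x₀, hx₀⟩ := Finset.card_pos.mp (Nat.lt_of_lt_of_le Nat.one_pos hcard.le)
  by_cases hspan : affineSpan ℝ (X : Set (EuclideanSpace ℝ (Fin n))) = ⊤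
  · -- full-dimensional case : volume argument
    set K : Set (EuclideanSpace ℝ (Fin n)) := convexHull ℝ (X : Set (EuclideanSpace ℝ (Fin n))) with hKdef
    have hKconv : Convex ℝ K := convex_convexHull ℝ _
    have hKcpt : IsCompact K := X.finite_toSet.isCompact_convexHull ℝ
    have hKint : (interior K).Nonempty := by
      rw [hKconv.interior_nonempty_iff_affineSpan_eq_top, affineSpan_convexHull]
      exact hspan
    set C : EuclideanSpace ℝ (Fin n) → Set (EuclideanSpace ℝ (Fin n)) :=
      fun x => (2⁻¹ : ℝ) • (x +ᵥ K) with hCdef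
    have hCconv : ∀ x, Convex ℝ (C x) := by
      intro x
      exact ((hKconv.translate x).smul _)
    have hCsub : ∀ x ∈ X, C x ⊆ K := by
      intro x hx p hp
      obtain ⟨q, hq, rfl⟩ := hp
      obtain ⟨k, hk, rfl⟩ := hq
      have hxK : x ∈ K := subset_convexHull ℝ _ hx
      have := hKconv hxK hk (by norm_num : (0:ℝ) ≤ 2⁻¹) (by norm_num : (0:ℝ) ≤ 2⁻¹)
        (by norm_num)
      simpa [vadd_eq_add, smul_add] using this
    -- disjointness of interiors
    have hdisj : (X : Set (EuclideanSpace ℝ (Fin n))).PairwiseDisjoint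
        fun x => interior (C x) := by
      intro x hx' y hy' hxy
      have hx : x ∈ X := Finset.mem_coe.mp hx'
      have hy : y ∈ X := Finset.mem_coe.mp hy'
      obtain ⟨hmA, hmI⟩ := hX y hy x hx (Ne.symm hxy)
      set m : EuclideanSpace ℝ (Fin n) := (2⁻¹ : ℝ) • (y - x) with hm
      obtain ⟨f, hfm, hfA⟩ := aux_support_fn hA h0 hmI
      set c : ℝ := f m with hc
      have hfyx : f y - f x = 2 * c := by
        have : f m = 2⁻¹ * (f y - f x) := by rw [hm, _root_.map_smul, map_sub]; simp
        rw [hc, this]; ring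
      have hup : ∀ z ∈ X, f z ≤ f x + 2 * c := by
        intro z hz
        rcases eq_or_ne z x with rfl | hne
        · linarith
        · have := hfA _ (hX z hz x hx hne).1
          rw [_root_.map_smul, map_sub, smul_eq_mul] at this
          linarith
      have hlow : ∀ z ∈ X, f x ≤ f z := by
        intro z hz
        rcases eq_or_ne y z with rfl | hne
        · linarith
        · have := hfA _ (hX y hy z hz hne).1
          rw [_root_.map_smul, map_sub, smul_eq_mul] at this
          linarith
      have hKup : ∀ k ∈ K, f k ≤ f x + 2 * c := by
        intro k hk
        have hsub : (X : Set (EuclideanSpace ℝ (Fin n))) ⊆ {z | f z ≤ f x + 2 * c} := fun z hz => hup z hz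
        have : K ⊆ {z | f z ≤ f x + 2 * c} :=
          convexHull_min hsub (convex_halfSpace_le (f.toLinearMap.isLinear) _)
        exact this hk
      have hKlow : ∀ k ∈ K, f x ≤ f k := by
        intro k hk
        have hsub : (X : Set (EuclideanSpace ℝ (Fin n))) ⊆ {z | f x ≤ f z} := fun z hz => hlow z hz
        have : K ⊆ {z | f x ≤ f z} :=
          convexHull_min hsub (convex_halfSpace_ge (f.toLinearMap.isLinear) _)
        exact this hk
      have hCxle : ∀ p ∈ C x, f p ≤ f x + c := by
        rintro p ⟨q, ⟨k, hk, rfl⟩, rfl⟩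
        rw [_root_.map_smul, smul_eq_mul]
        have := hKup k hk
        have h2 : f (x +ᵥ k) = f x + f k := by rw [vadd_eq_add, map_add]
        rw [h2]
        linarith
      have hCyge : ∀ p ∈ C y, f x + c ≤ f p := by
        rintro p ⟨q, ⟨k, hk, rfl⟩, rfl⟩
        rw [_root_.map_smul, smul_eq_mul]
        have := hKlow k hk
        have h2 : f (y +ᵥ k) = f y + f k := by rw [vadd_eq_add, map_add]
        rw [h2]
        linarith
      have hx_lt : ∀ p ∈ interior (C x), f p < f x + c :=
        fun p hp => aux_lt_on_interior f hfm hCxle hp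
      have hy_gt : ∀ p ∈ interior (C y), f x + c < f p := by
        intro p hp
        have hneg : ∀ z ∈ C y, (-f) z ≤ -(f x + c) := by
          intro z hz
          have := hCyge z hz
          simp only [ContinuousLinearMap.neg_apply]
          linarith
        have hnegm : 0 < (-f) (-m) := by
          simp only [ContinuousLinearMap.neg_apply, map_neg, neg_neg]
          exact hfm
        have := aux_lt_on_interior (-f) hnegm hneg hp
        simp only [ContinuousLinearMap.neg_apply] at this
        linarith
      simp only [Function.onFun]
      rw [Set.disjoint_left]
      intro p hpx hpy
      exact absurd (hy_gt p hpy) (not_lt.2 (le_of_lt (hx_lt p hpx)))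
    -- measure computation
    set μ : Measure (EuclideanSpace ℝ (Fin n)) := volume with hμ
    have hμK_pos : 0 < μ K :=
      lt_of_lt_of_le (isOpen_interior.measure_pos μ hKint) (measure_mono interior_subset)
    have hμK_fin : μ K < ⊤ := hKcpt.measure_lt_top
    have hCval : ∀ x : EuclideanSpace ℝ (Fin n), μ (C x) = ENNReal.ofReal (2⁻¹ ^ n) * μ K := by
      intro x
      rw [hCdef]
      simp only
      rw [Measure.addHaar_smul, finrank_euclideanSpace_fin, MeasureTheory.measure_vadd]
      congr 1
      rw [abs_of_nonneg (by positivity : (0:ℝ) ≤ (2⁻¹:ℝ) ^ n)]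
    have hCint : ∀ x : EuclideanSpace ℝ (Fin n), μ (interior (C x)) = ENNReal.ofReal (2⁻¹ ^ n) * μ K := by
      intro x
      refine le_antisymm ((measure_mono interior_subset).trans (hCval x).le) ?_
      rw [← hCval x]
      have hfr : μ (frontier (C x)) = 0 := (hCconv x).addHaar_frontier μ
      calc μ (C x) ≤ μ (interior (C x) ∪ frontier (C x)) := by
            refine measure_mono ?_
            rw [← closure_eq_interior_union_frontier]
            exact subset_closure
        _ ≤ μ (interior (C x)) + μ (frontier (C x)) := measure_union_le _ _
        _ = μ (interior (C x)) := by rw [hfr, add_zero]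
    have hsum : ∑ x ∈ X, μ (interior (C x)) = μ (⋃ x ∈ X, interior (C x)) :=
      (measure_biUnion_finset hdisj fun x _ => isOpen_interior.measurableSet).symm
    have hunion_le : μ (⋃ x ∈ X, interior (C x)) ≤ μ K := by
      refine measure_mono ?_
      refine Set.iUnion₂_subset fun x hx => ?_
      exact interior_subset.trans (hCsub x hx)
    have hmain : (X.card : ℝ≥0∞) * (ENNReal.ofReal (2⁻¹ ^ n) * μ K) ≤ μ K := by
      calc (X.card : ℝ≥0∞) * (ENNReal.ofReal (2⁻¹ ^ n) * μ K)
          = ∑ x ∈ X, μ (interior (C x)) := by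
            rw [Finset.sum_congr rfl fun x _ => hCint x, Finset.sum_const, nsmul_eq_mul]
        _ = μ (⋃ x ∈ X, interior (C x)) := hsum
        _ ≤ μ K := hunion_le
    -- arithmetic
    have hofReal : ENNReal.ofReal ((2:ℝ)⁻¹ ^ n) = ((2 : ℝ≥0∞) ^ n)⁻¹ := by
      rw [inv_pow, ENNReal.ofReal_inv_of_pos (by positivity), ENNReal.ofReal_pow (by norm_num)]
      norm_num
    rw [hofReal] at hmain
    have h2pow_ne0 : ((2 : ℝ≥0∞) ^ n) ≠ 0 := by positivity
    have h2pow_netop : ((2 : ℝ≥0∞) ^ n) ≠ ⊤ := by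
      exact ENNReal.pow_ne_top (by norm_num)
    have hcard_le : (X.card : ℝ≥0∞) * ((2 : ℝ≥0∞) ^ n)⁻¹ ≤ 1 := by
      rw [← mul_assoc] at hmain
      exact (ENNReal.mul_le_mul_iff_left hμK_pos.ne' hμK_fin.ne).mp (by simpa using hmain)
    have hfinal : (X.card : ℝ≥0∞) ≤ (2 : ℝ≥0∞) ^ n := by
      calc (X.card : ℝ≥0∞) = (X.card : ℝ≥0∞) * (((2 : ℝ≥0∞) ^ n)⁻¹ * (2 : ℝ≥0∞) ^ n) := by
            rw [ENNReal.inv_mul_cancel h2pow_ne0 h2pow_netop, mul_one]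
        _ = ((X.card : ℝ≥0∞) * ((2 : ℝ≥0∞) ^ n)⁻¹) * (2 : ℝ≥0∞) ^ n := by ring
        _ ≤ 1 * (2 : ℝ≥0∞) ^ n := by
            exact mul_le_mul_left hcard_le _
        _ = (2 : ℝ≥0∞) ^ n := one_mul _
    have : (X.card : ℝ≥0∞) ≤ ((2 ^ n : ℕ) : ℝ≥0∞) := by
      rw [Nat.cast_pow, Nat.cast_ofNat]
      exact hfinal
    exact_mod_cast this
  · -- degenerate case: descend into a proper subspace
    set V : Submodule ℝ (EuclideanSpace ℝ (Fin n)) :=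
      vectorSpan ℝ (X : Set (EuclideanSpace ℝ (Fin n))) with hVdef
    have hV : V ≠ ⊤ := by
      intro h
      apply hspan
      have hne : (X : Set (EuclideanSpace ℝ (Fin n))).Nonempty := ⟨x₀, hx₀⟩
      rw [← AffineSubspace.direction_eq_top_iff_of_nonempty
        ((affineSpan_nonempty ℝ).2 hne), direction_affineSpan]
      exact h
    have hdlt : Module.finrank ℝ V < n := by
      have := Submodule.finrank_lt (K := ℝ) (V := EuclideanSpace ℝ (Fin n)) hV
      rwa [finrank_euclideanSpace_fin] at this
    set d := Module.finrank ℝ V with hd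
    have hfr : Module.finrank ℝ V = Module.finrank ℝ (EuclideanSpace ℝ (Fin d)) := by
      rw [finrank_euclideanSpace_fin]
    set φ : V ≃L[ℝ] EuclideanSpace ℝ (Fin d) := ContinuousLinearEquiv.ofFinrankEq hfr with hφ
    set A_V : Set V := ((↑) : V → EuclideanSpace ℝ (Fin n)) ⁻¹' A with hAV
    set A' : Set (EuclideanSpace ℝ (Fin d)) := φ '' A_V with hA'
    -- properties of A'
    have hAVconv : Convex ℝ A_V := hA.linear_preimage V.subtype
    have hA'conv : Convex ℝ A' := hAVconv.linear_image (φ : V →ₗ[ℝ] EuclideanSpace ℝ (Fin d))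
    have hAVzero : (0 : V) ∈ interior A_V := by
      obtain ⟨ε, hε, hball⟩ := Metric.isOpen_iff.1 isOpen_interior 0 h0
      have hsub : Metric.ball (0 : V) ε ⊆ A_V := by
        intro w hw
        have : ‖(w : EuclideanSpace ℝ (Fin n))‖ < ε := by
          have : ‖w‖ < ε := by simpa [Metric.mem_ball, dist_eq_norm] using hw
          simpa using this
        have : (w : EuclideanSpace ℝ (Fin n)) ∈ Metric.ball (0 : EuclideanSpace ℝ (Fin n)) ε := by
          simpa [Metric.mem_ball, dist_eq_norm] using this
        have hmem : (w : EuclideanSpace ℝ (Fin n)) ∈ A := interior_subset (hball this)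
        exact hmem
      exact mem_interior.2 ⟨Metric.ball 0 ε, hsub, Metric.isOpen_ball, Metric.mem_ball_self hε⟩
    have hA'int : (interior A').Nonempty := by
      have : interior A' = φ '' interior A_V := by
        rw [hA']
        exact (φ.toHomeomorph.image_interior A_V).symm
      rw [this]
      exact ⟨φ 0, Set.mem_image_of_mem _ hAVzero⟩
    have hAVneg : ∀ w : V, w ∈ A_V → -w ∈ A_V := by
      intro w hw
      have hcoe : (w : EuclideanSpace ℝ (Fin n)) ∈ A := hw
      have : -(w : EuclideanSpace ℝ (Fin n)) ∈ A := by
        rw [hsymm]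
        exact Set.neg_mem_neg.2 hcoe
      simpa [hAV] using this
    have hA'symm : A' = -A' := by
      ext z
      simp only [Set.mem_neg]
      constructor
      · rintro ⟨w, hw, rfl⟩
        exact ⟨-w, hAVneg w hw, by rw [map_neg]⟩
      · rintro ⟨w, hw, hwz⟩
        exact ⟨-w, hAVneg w hw, by rw [map_neg, hwz, neg_neg]⟩
    -- the image point set
    have hsubmem : ∀ x ∈ X, x - x₀ ∈ V := by
      intro x hx
      have := vsub_mem_vectorSpan ℝ (Finset.mem_coe.2 hx) (Finset.mem_coe.2 hx₀)
      simpa [hVdef] using this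
    set g : ({x : EuclideanSpace ℝ (Fin n) // x ∈ X} → EuclideanSpace ℝ (Fin d)) :=
      fun z => φ ⟨z.1 - x₀, hsubmem z.1 z.2⟩ with hg
    have hginj : Function.Injective g := by
      intro z w hzw
      have := φ.injective hzw
      have h2 : z.1 - x₀ = w.1 - x₀ := congrArg Subtype.val this
      have : z.1 = w.1 := by
        have := sub_left_injective h2
        exact this
      exact Subtype.ext this
    set X' : Finset (EuclideanSpace ℝ (Fin d)) := X.attach.image g with hX'
    have hcard' : X'.card = X.card := by
      rw [hX', Finset.card_image_of_injective _ hginj, Finset.card_attach]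
    have hX'inv : ∀ x' ∈ X', ∀ y' ∈ X', x' ≠ y' →
        (2⁻¹ : ℝ) • (x' - y') ∈ A' \ interior A' := by
      intro x' hx' y' hy' hne
      obtain ⟨zx, -, rfl⟩ := Finset.mem_image.mp hx'
      obtain ⟨zy, -, rfl⟩ := Finset.mem_image.mp hy'
      have hxy : zx.1 ≠ zy.1 := by
        intro h
        have hz : zx = zy := Subtype.ext h
        exact hne (by rw [hz])
      obtain ⟨hmA, hmI⟩ := hX zx.1 zx.2 zy.1 zy.2 hxy
      have hmem2 : (2⁻¹ : ℝ) • (zx.1 - zy.1) ∈ V := by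
        have h1 := hsubmem zx.1 zx.2
        have h2 := hsubmem zy.1 zy.2
        have h3 : zx.1 - zy.1 ∈ V := by
          have := V.sub_mem h1 h2
          simpa [sub_sub_sub_cancel_right] using this
        exact V.smul_mem _ h3
      set w : V := ⟨(2⁻¹ : ℝ) • (zx.1 - zy.1), hmem2⟩ with hw
      have hkey : (2⁻¹ : ℝ) • (g zx - g zy) = φ w := by
        simp only [hg]
        rw [← map_sub, ← _root_.map_smul]
        congr 1
        apply Subtype.ext
        simp only [hw, Submodule.coe_smul, Submodule.coe_sub]
        congr 1
        exact sub_sub_sub_cancel_right _ _ _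
      rw [hkey]
      constructor
      · exact ⟨w, by simpa [hAV, hw] using hmA, rfl⟩
      · intro hcon
        have hIntEq : interior A' = φ '' interior A_V := by
          rw [hA']
          exact (φ.toHomeomorph.image_interior A_V).symm
        rw [hIntEq] at hcon
        obtain ⟨w', hw', hww⟩ := hcon
        have : w ∈ interior A_V := by
          rwa [φ.injective hww] at hw'
        have := aux_mem_interior_of_subtype hA h0 V this
        rw [hw] at this
        exact hmI this
    have := IH d hdlt A' hA'conv hA'int hA'symm X' hX'inv
    calc X.card = X'.card := hcard'.symm
      _ ≤ 2 ^ d := this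
      _ ≤ 2 ^ n := Nat.pow_le_pow_right (by norm_num) hdlt.le

end Petty

/-- If `A ⊆ ℝⁿ` is a centrally symmetric convex body (`A = -A`) and `X` is a finite set
such that for all distinct `x₁, x₂ ∈ X` the translates `x₁ + A` and `x₂ + A` touch each
other, then `|X| ≤ 2^n`. -/
theorem card_le_of_touching_translates (n : ℕ) (A : Set (EuclideanSpace ℝ (Fin n)))
    (hconv : Convex ℝ A) (hcomp : IsCompact A) (hint : (interior A).Nonempty)
    (hsymm : A = -A) (X : Finset (EuclideanSpace ℝ (Fin n)))
    (htouch : ∀ x₁ ∈ X, ∀ x₂ ∈ X, x₁ ≠ x₂ → Touches (x₁ +ᵥ A) (x₂ +ᵥ A)) :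
    X.card ≤ 2 ^ n := by
  classical
  have hIntNeg : ∀ z, z ∈ interior A → -z ∈ interior A := by
    intro z hz
    have heq : interior A = -interior A := by
      conv_lhs => rw [hsymm]
      exact aux_interior_neg A
    rw [heq]
    exact Set.neg_mem_neg.2 hz
  refine petty_core n A hconv hint hsymm X ?_
  intro x hx y hy hxy
  obtain ⟨⟨p, hp1, hp2⟩, hdisj⟩ := htouch x hx y hy hxy
  constructor
  · -- membership in A
    obtain ⟨a, ha, hpa⟩ := hp1
    obtain ⟨b, hb, hpb⟩ := hp2
    have hxy_eq : x - y = b - a := by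
      have h1 : p = x + a := by rw [← hpa]; rfl
      have h2 : p = y + b := by rw [← hpb]; rfl
      have h3 : x + a = y + b := by rw [← h1, h2]
      rw [sub_eq_sub_iff_add_eq_add, h3, add_comm]
    have hna : -a ∈ A := by
      rw [hsymm]
      exact Set.neg_mem_neg.2 ha
    have := hconv hb hna (by norm_num : (0:ℝ) ≤ 2⁻¹) (by norm_num : (0:ℝ) ≤ 2⁻¹) (by norm_num)
    rw [hxy_eq]
    convert this using 1
    module
  · -- not in interior
    intro hmi
    set m := (2⁻¹ : ℝ) • (x - y) with hm
    have hq1 : x + -m ∈ interior (x +ᵥ A) := by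
      rw [interior_vadd]
      exact ⟨-m, hIntNeg m hmi, rfl⟩
    have hq2 : x + -m ∈ interior (y +ᵥ A) := by
      rw [interior_vadd]
      refine ⟨m, hmi, ?_⟩
      show y + m = x + -m
      rw [hm]
      module
    have : x + -m ∈ interior (x +ᵥ A) ∩ interior (y +ᵥ A) := ⟨hq1, hq2⟩
    rw [hdisj] at this
    exact this
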